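/- Let μ ∈ ℂ with μ ≠ 0 and let u ∈ (ℂ^d)^N with u ≠ 0. The following are equivalent: (i) u is a left eigenvector of the characteristic matrix at μ, i.e., for every v ∈ (ℂ^d)^N and every differentiable q : [0,1] → (ℂ^d)^N with q'(s) = A(s, μ)q(s) on [0,1] and q(0) = v, one has u* (q(1) − B(μ)v) = 0 (u* denoting conjugate transpose); (ii) u is a right eigenvector of the transposed problem at conj(μ), i.e., there exists a differentiable p : [0,1] → (ℂ^d)^N with p'(s) = −A(s, conj(μ))ᵀ p(s) on [0,1], p(1) = u, and p(0) = B(conj(μ))ᵀ u. (Theorem 4.1: characterization of left eigenvectors of the characteristic matrix.) -/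

import Mathlib

open scoped BigOperators

noncomputable section

/-- `aExp N k = ⌊(k-1)/N⌋` (floor division). -/
def aExp (N : ℕ) (k : ℤ) : ℤ := Int.fdiv (k - 1) (N : ℤ)

/-- `bIdx N hN k` is the `Fin N` index (zero-based) corresponding to the
paper index `b_k = ((k-1) mod N) + 1 ∈ {1,…,N}`. -/
def bIdx (N : ℕ) (hN : 0 < N) (k : ℤ) : Fin N :=
  ⟨((k - 1) % (N : ℤ)).toNat, by
    have hN' : (0:ℤ) < (N:ℤ) := by exact_mod_cast hN
    have h1 : 0 ≤ (k - 1) % (N : ℤ) := Int.emod_nonneg _ (ne_of_gt hN')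
    have h2 : (k - 1) % (N : ℤ) < (N : ℤ) := Int.emod_lt_of_pos _ hN'
    omega⟩

/-- The block linear map `A(s,μ)` acting on `(ℂ^d)^N`:
`(A(s,μ)q)_n = Δ Σ_j A_j((s+n-1)Δ) μ^{a_{n-n_j}} q_{b_{n-n_j}}` (paper indices `n = 1,…,N`). -/
def Aop (d h N : ℕ) (hN : 0 < N) (Δ : ℝ)
    (A : Fin (h+1) → ℝ → Matrix (Fin d) (Fin d) ℝ) (nn : Fin (h+1) → ℕ)
    (s : ℝ) (μ : ℂ) (q : Fin N → Fin d → ℂ) : Fin N → Fin d → ℂ :=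
  fun n i => (Δ : ℂ) * ∑ j : Fin (h+1),
    μ ^ aExp N (((n : ℕ) : ℤ) + 1 - (nn j : ℤ)) *
      ∑ i' : Fin d, ((A j ((s + ((n : ℕ) : ℝ)) * Δ)) i i' : ℂ) *
        q (bIdx N hN (((n : ℕ) : ℤ) + 1 - (nn j : ℤ))) i'

/-- The linear map `B(μ)` on `(ℂ^d)^N`:
`(B(μ)q)_n = q_{n+1}` for `n = 1,…,N-1` and `(B(μ)q)_N = μ q_1`. -/
def Bop (d N : ℕ) (hN : 0 < N) (μ : ℂ) (q : Fin N → Fin d → ℂ) : Fin N → Fin d → ℂ :=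
  fun n i => if hn : (n : ℕ) + 1 < N then q ⟨(n : ℕ) + 1, hn⟩ i else μ * q ⟨0, hN⟩ i

/-- The transpose (without conjugation) `A(s,μ)ᵀ` of the block map `A(s,μ)`,
acting on `p ∈ (ℂ^d)^N`. -/
def AopT (d h N : ℕ) (hN : 0 < N) (Δ : ℝ)
    (A : Fin (h+1) → ℝ → Matrix (Fin d) (Fin d) ℝ) (nn : Fin (h+1) → ℕ)
    (s : ℝ) (μ : ℂ) (p : Fin N → Fin d → ℂ) : Fin N → Fin d → ℂ :=
  fun n i => (Δ : ℂ) * ∑ m : Fin N, ∑ j : Fin (h+1),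
    if n = bIdx N hN (((m : ℕ) : ℤ) + 1 - (nn j : ℤ)) then
      μ ^ aExp N (((m : ℕ) : ℤ) + 1 - (nn j : ℤ)) *
        ∑ i' : Fin d, ((A j ((s + ((m : ℕ) : ℝ)) * Δ)) i' i : ℂ) * p m i'
    else 0

/-- The transpose `B(μ)ᵀ` of `B(μ)`:
`(B(μ)ᵀ v)_1 = μ v_N` and `(B(μ)ᵀ v)_n = v_{n-1}` for `n = 2,…,N`. -/
def BopT (d N : ℕ) (hN : 0 < N) (μ : ℂ) (v : Fin N → Fin d → ℂ) : Fin N → Fin d → ℂ :=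
  fun n i => if hn : 0 < (n : ℕ) then
      v ⟨(n : ℕ) - 1, by have := n.isLt; omega⟩ i
    else μ * v ⟨N - 1, by omega⟩ i

open Set Finset

section ODE
variable {E : Type*} [NormedAddCommGroup E] [NormedSpace ℝ E]

/-- radial retraction onto closed ball of radius R -/
private def ballProj (R : ℝ) (x : E) : E := (R / max R ‖x‖) • x
private lemma ballProj_norm_le (R : ℝ) (hR : 0 < R) (x : E) : ‖ballProj R x‖ ≤ R := by
  rw [ballProj, norm_smul]
  have h1 : (0:ℝ) < max R ‖x‖ := lt_max_of_lt_left hR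
  rw [Real.norm_eq_abs, abs_of_nonneg (by positivity)]
  rw [div_mul_eq_mul_div, div_le_iff₀ h1]
  have : ‖x‖ ≤ max R ‖x‖ := le_max_right _ _
  nlinarith
private lemma ballProj_norm_le_self (R : ℝ) (hR : 0 < R) (x : E) : ‖ballProj R x‖ ≤ ‖x‖ := by
  rw [ballProj, norm_smul]
  have h1 : (0:ℝ) < max R ‖x‖ := lt_max_of_lt_left hR
  rw [Real.norm_eq_abs, abs_of_nonneg (by positivity)]
  have h2 : R / max R ‖x‖ ≤ 1 := div_le_one_of_le₀ (le_max_left _ _) h1.le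
  nlinarith [norm_nonneg x]
private lemma ballProj_eq_self (R : ℝ) (x : E) (hx : ‖x‖ ≤ R) : ballProj R x = x := by
  rw [ballProj, max_eq_left hx]
  rcases eq_or_ne R 0 with h | h
  · have : ‖x‖ = 0 := le_antisymm (h ▸ hx) (norm_nonneg x)
    simp [norm_eq_zero.mp this]
  · rw [div_self h, one_smul]
private lemma ballProj_lipschitz (R : ℝ) (hR : 0 < R) : LipschitzWith 2 (ballProj (E := E) R) := by
  refine LipschitzWith.of_dist_le_mul fun x y => ?_
  rw [dist_eq_norm, dist_eq_norm, ballProj, ballProj]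
  set a := max R ‖x‖ with ha
  set b := max R ‖y‖ with hb
  have ha0 : 0 < a := lt_max_of_lt_left hR
  have hb0 : 0 < b := lt_max_of_lt_left hR
  have key : (R/a) • x - (R/b) • y = (R/a) • (x - y) + ((R/a) - (R/b)) • y := by
    rw [smul_sub, sub_smul]; abel
  rw [key]
  have h1 : ‖(R/a) • (x-y)‖ ≤ ‖x - y‖ := by
    rw [norm_smul, Real.norm_eq_abs, abs_of_nonneg (by positivity)]
    have h2 : R / a ≤ 1 := div_le_one_of_le₀ (le_max_left _ _) ha0.le
    nlinarith [norm_nonneg (x-y)]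
  have h2 : ‖((R/a) - (R/b)) • y‖ ≤ ‖x - y‖ := by
    rw [norm_smul, Real.norm_eq_abs]
    have hab : R/a - R/b = R * (b - a) / (a*b) := by field_simp
    have hba : |b - a| ≤ ‖x - y‖ := by
      have := abs_max_sub_max_le_abs ‖y‖ ‖x‖ R
      rw [max_comm ‖y‖ R, max_comm ‖x‖ R] at this
      calc |b - a| ≤ |‖y‖ - ‖x‖| := this
        _ ≤ ‖y - x‖ := abs_norm_sub_norm_le _ _
        _ = ‖x - y‖ := norm_sub_rev _ _
    rw [hab, abs_div, abs_of_nonneg (by positivity : (0:ℝ) ≤ a*b), abs_mul,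
      abs_of_nonneg hR.le]
    have hyb : ‖y‖ ≤ b := le_max_right _ _
    have hRa : R ≤ a := le_max_left _ _
    rw [div_mul_eq_mul_div, div_le_iff₀ (by positivity)]
    calc R * |b - a| * ‖y‖ ≤ R * ‖x - y‖ * b := by
          have := mul_le_mul hba hyb (norm_nonneg y) (norm_nonneg (x-y))
          nlinarith [abs_nonneg (b-a)]
      _ ≤ ‖x - y‖ * (a * b) := by
          have h3 : 0 ≤ ‖x - y‖ * b := mul_nonneg (norm_nonneg _) hb0.le
          nlinarith
  calc ‖(R/a) • (x-y) + ((R/a) - (R/b)) • y‖ ≤ ‖(R/a) • (x-y)‖ + ‖((R/a) - (R/b)) • y‖ := norm_add_le _ _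
    _ ≤ 2 * ‖x - y‖ := by push_cast; linarith
private lemma exists_forward [CompleteSpace E] (v : ℝ → E → E) (L : ℝ) (hL : 0 ≤ L)
    (t₀ c : ℝ) (hc : 0 < c)
    (hlip : ∀ t ∈ Icc t₀ (t₀+c), LipschitzWith (Real.toNNReal L) (v t))
    (h0 : ∀ t, v t 0 = 0)
    (hcont : ∀ x : E, ContinuousOn (fun t => v t x) (Icc t₀ (t₀+c)))
    (x₀ : E) :
    ∃ f : ℝ → E, f t₀ = x₀ ∧
      ∀ t ∈ Icc t₀ (t₀+c), HasDerivWithinAt f (v t (f t)) (Icc t₀ (t₀+c)) t := by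
  set R : ℝ := (‖x₀‖ + 1) * Real.exp (L*c) with hRdef
  have hR : 0 < R := by positivity
  set w : ℝ → E → E := fun t x => v t (ballProj R x) with hwdef
  have hvnorm : ∀ t ∈ Icc t₀ (t₀+c), ∀ y : E, ‖v t y‖ ≤ L * ‖y‖ := by
    intro t ht y
    have := (hlip t ht).dist_le_mul y 0
    rw [h0 t, dist_zero_right, dist_zero_right] at this
    calc ‖v t y‖ ≤ (Real.toNNReal L : ℝ) * ‖y‖ := this
      _ = L * ‖y‖ := by rw [Real.coe_toNNReal L hL]
  have hpl : IsPicardLindelof w (tmin := t₀) (tmax := t₀+c) ⟨t₀, le_refl _, by linarith⟩ x₀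
      (Real.toNNReal (L*R*c)) 0 (Real.toNNReal (L*R)) (Real.toNNReal L * 2) := by
    constructor
    · intro t ht
      exact ((hlip t ht).comp (ballProj_lipschitz R hR)).lipschitzOnWith
    · intro x _
      exact hcont (ballProj R x)
    · intro t ht x _
      rw [Real.coe_toNNReal _ (by positivity)]
      calc ‖w t x‖ ≤ L * ‖ballProj R x‖ := hvnorm t ht _
        _ ≤ L * R := by nlinarith [ballProj_norm_le R hR x]
    · have : max (t₀ + c - t₀) (t₀ - t₀) = c := by
        rw [max_eq_left] <;> linarith
      simp only [NNReal.coe_zero, sub_zero]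
      rw [Real.coe_toNNReal _ (by positivity), Real.coe_toNNReal _ (by positivity), this]
  obtain ⟨f, hf0, hfd⟩ := hpl.exists_eq_forall_mem_Icc_hasDerivWithinAt₀
  have hf0 : f t₀ = x₀ := hf0
  have hcontf : ContinuousOn f (Icc t₀ (t₀+c)) :=
    fun t ht => (hfd t ht).continuousWithinAt
  have hbound : ∀ t ∈ Icc t₀ (t₀+c), ‖f t‖ ≤ R := by
    have hg := norm_le_gronwallBound_of_norm_deriv_right_le (f := f)
      (f' := fun t => w t (f t)) (δ := ‖x₀‖) (K := L) (ε := 0) (a := t₀) (b := t₀+c)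
      hcontf
      (fun x hx => (hfd x (Ico_subset_Icc_self hx)).mono_of_mem_nhdsWithin
        (Icc_mem_nhdsGE_of_mem hx))
      (by rw [hf0])
      (fun x hx => by
        have h1 : ‖w x (f x)‖ ≤ L * ‖ballProj R (f x)‖ :=
          hvnorm x (Ico_subset_Icc_self hx) _
        have h2 := ballProj_norm_le_self R hR (f x)
        nlinarith)
    intro t ht
    have := hg t ht
    rw [gronwallBound_ε0] at this
    have h3 : Real.exp (L * (t - t₀)) ≤ Real.exp (L * c) := by
      apply Real.exp_le_exp.mpr
      have := ht.1; have := ht.2; nlinarith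
    calc ‖f t‖ ≤ ‖x₀‖ * Real.exp (L * (t - t₀)) := this
      _ ≤ (‖x₀‖ + 1) * Real.exp (L * c) := by
          nlinarith [Real.exp_pos (L * (t - t₀)), norm_nonneg x₀]
  refine ⟨f, hf0, fun t ht => ?_⟩
  have := hfd t ht
  simp only [hwdef] at this
  rwa [ballProj_eq_self R (f t) (hbound t ht)] at this

private lemma exists_backward [CompleteSpace E] (v : ℝ → E → E) (L : ℝ) (hL : 0 ≤ L)
    (t₀ c : ℝ) (hc : 0 < c)
    (hlip : ∀ t ∈ Icc (t₀-c) t₀, LipschitzWith (Real.toNNReal L) (v t))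
    (h0 : ∀ t, v t 0 = 0)
    (hcont : ∀ x : E, ContinuousOn (fun t => v t x) (Icc (t₀-c) t₀))
    (x₀ : E) :
    ∃ f : ℝ → E, f t₀ = x₀ ∧
      ∀ t ∈ Icc (t₀-c) t₀, HasDerivWithinAt f (v t (f t)) (Icc (t₀-c) t₀) t := by
  set v' : ℝ → E → E := fun s y => -(v (2*t₀ - s) y) with hv'
  have hmaps : ∀ s ∈ Icc t₀ (t₀+c), 2*t₀ - s ∈ Icc (t₀-c) t₀ := by
    intro s hs; constructor <;> [skip; skip] <;> (have := hs.1; have := hs.2; simp; linarith)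
  obtain ⟨g, hg0, hgd⟩ := exists_forward v' L hL t₀ c hc
    (fun s hs => by
      refine LipschitzWith.of_dist_le_mul fun x y => ?_
      rw [hv']
      simp only [dist_neg_neg]
      exact (hlip _ (hmaps s hs)).dist_le_mul x y)
    (fun s => by simp [hv', h0])
    (fun x => by
      have h1 : ContinuousOn (fun s : ℝ => 2*t₀ - s) (Icc t₀ (t₀+c)) :=
        (continuous_const.sub continuous_id).continuousOn
      exact ((hcont x).comp h1 (fun s hs => hmaps s hs)).neg)
    x₀
  refine ⟨fun t => g (2*t₀ - t), by show g (2*t₀-t₀) = x₀; rw [show 2*t₀-t₀ = t₀ by ring]; exact hg0, fun t ht => ?_⟩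
  have hmaps' : MapsTo (fun t : ℝ => 2*t₀ - t) (Icc (t₀-c) t₀) (Icc t₀ (t₀+c)) := by
    intro s hs; constructor <;> (have := hs.1; have := hs.2; simp at *; linarith)
  have hst : (2:ℝ)*t₀ - t ∈ Icc t₀ (t₀+c) := hmaps' ht
  have hinner : HasDerivWithinAt (fun t : ℝ => 2*t₀ - t) (-1) (Icc (t₀-c) t₀) t :=
    ((hasDerivAt_const t (2*t₀)).sub (hasDerivAt_id t)).hasDerivWithinAt.congr_deriv (by norm_num)
  have := (hgd _ hst).scomp t hinner hmaps'
  simp only [hv'] at this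
  have h2 : (2:ℝ)*t₀ - (2*t₀ - t) = t := by ring
  rw [h2] at this
  convert this using 1
  · rfl
  simp

private lemma exists_sol_Icc01 [CompleteSpace E] (v : ℝ → E → E) (L : ℝ) (hL : 0 ≤ L)
    (t₀ : ℝ) (ht₀ : t₀ ∈ Icc (0:ℝ) 1)
    (hlip : ∀ t ∈ Icc (-2:ℝ) 3, LipschitzWith (Real.toNNReal L) (v t))
    (h0 : ∀ t, v t 0 = 0)
    (hcont : ∀ x : E, ContinuousOn (fun t => v t x) (Icc (-2:ℝ) 3))
    (x₀ : E) :
    ∃ f : ℝ → E, f t₀ = x₀ ∧ ∀ t ∈ Icc (0:ℝ) 1, HasDerivAt f (v t (f t)) t := by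
  obtain ⟨ht₀0, ht₀1⟩ := ht₀
  have hsubF : Icc t₀ (t₀+2) ⊆ Icc (-2:ℝ) 3 := Icc_subset_Icc (by linarith) (by linarith)
  have hsubB : Icc (t₀-2) t₀ ⊆ Icc (-2:ℝ) 3 := Icc_subset_Icc (by linarith) (by linarith)
  obtain ⟨fp, hfp0, hfpd⟩ := exists_forward v L hL t₀ 2 (by norm_num)
    (fun t ht => hlip t (hsubF ht)) h0 (fun x => (hcont x).mono hsubF) x₀
  obtain ⟨fm, hfm0, hfmd⟩ := exists_backward v L hL t₀ 2 (by norm_num)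
    (fun t ht => hlip t (hsubB ht)) h0 (fun x => (hcont x).mono hsubB) x₀
  set f : ℝ → E := fun t => if t₀ ≤ t then fp t else fm t with hfdef
  have hf0 : f t₀ = x₀ := by simp [hfdef, hfp0]
  refine ⟨f, hf0, fun t ht => ?_⟩
  obtain ⟨ht0, ht1⟩ := ht
  rcases lt_trichotomy t t₀ with hlt | heq | hgt
  · -- t < t₀ : use fm
    have htm : t ∈ Icc (t₀-2) t₀ := ⟨by linarith, hlt.le⟩
    have hd : HasDerivAt fm (v t (fm t)) t :=
      (hfmd t htm).hasDerivAt (Icc_mem_nhds (by linarith) (by linarith))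
    have hft : f t = fm t := by simp [hfdef, not_le.mpr hlt]
    rw [hft]
    apply hd.congr_of_eventuallyEq
    filter_upwards [Iio_mem_nhds hlt] with s hs
    simp [hfdef, not_le.mpr (mem_Iio.mp hs)]
  · -- t = t₀
    subst heq
    have hIci : HasDerivWithinAt f (v t (f t)) (Ici t) t := by
      have h1 : HasDerivWithinAt fp (v t (fp t)) (Ici t) t :=
        (hfpd t ⟨le_refl _, by linarith⟩).mono_of_mem_nhdsWithin
          (Icc_mem_nhdsGE_of_mem ⟨le_refl _, by linarith⟩)
      have h2 : HasDerivWithinAt f (v t (fp t)) (Ici t) t :=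
        h1.congr (fun s hs => by simp [hfdef, mem_Ici.mp hs]) (by simp [hfdef])
      have : f t = fp t := by simp [hfdef]
      rwa [← this] at h2
    have hIic : HasDerivWithinAt f (v t (f t)) (Iic t) t := by
      have h1 : HasDerivWithinAt fm (v t (fm t)) (Iic t) t :=
        (hfmd t ⟨by linarith, le_refl _⟩).mono_of_mem_nhdsWithin
          (Icc_mem_nhdsLE_of_mem ⟨by linarith, le_refl _⟩)
      have heqs : ∀ s ∈ Iic t, f s = fm s := by
        intro s hs
        rcases eq_or_lt_of_le (mem_Iic.mp hs) with h | h
        · subst h; simp [hfdef, hfp0, hfm0]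
        · simp [hfdef, not_le.mpr h]
      have h2 : HasDerivWithinAt f (v t (fm t)) (Iic t) t :=
        h1.congr heqs (heqs t (mem_Iic.mpr le_rfl))
      have : f t = fm t := heqs t (mem_Iic.mpr le_rfl)
      rwa [← this] at h2
    have := hIic.union hIci
    rwa [Iic_union_Ici, hasDerivWithinAt_univ] at this
  · -- t > t₀ : use fp
    have htp : t ∈ Icc t₀ (t₀+2) := ⟨hgt.le, by linarith⟩
    have hd : HasDerivAt fp (v t (fp t)) t :=
      (hfpd t htp).hasDerivAt (Icc_mem_nhds (by linarith) (by linarith))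
    have hft : f t = fp t := by simp [hfdef, hgt.le]
    rw [hft]
    apply hd.congr_of_eventuallyEq
    filter_upwards [Ioi_mem_nhds hgt] with s hs
    simp [hfdef, (le_of_lt (mem_Ioi.mp hs) : t₀ ≤ s)]

end ODE

variable {d h N : ℕ} (hN : 0 < N) (Δ : ℝ)
    (A : Fin (h+1) → ℝ → Matrix (Fin d) (Fin d) ℝ) (nn : Fin (h+1) → ℕ)

lemma Aop_sub (s : ℝ) (μ : ℂ) (x y : Fin N → Fin d → ℂ) :
    Aop d h N hN Δ A nn s μ (x - y)
      = Aop d h N hN Δ A nn s μ x - Aop d h N hN Δ A nn s μ y := by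
  funext n i
  simp [Aop, Pi.sub_apply, mul_sub, Finset.sum_sub_distrib]

lemma Aop_zero (s : ℝ) (μ : ℂ) : Aop d h N hN Δ A nn s μ 0 = 0 := by
  funext n i; simp [Aop]

lemma AopT_sub (s : ℝ) (μ : ℂ) (x y : Fin N → Fin d → ℂ) :
    AopT d h N hN Δ A nn s μ (x - y)
      = AopT d h N hN Δ A nn s μ x - AopT d h N hN Δ A nn s μ y := by
  funext n i
  simp only [AopT, Pi.sub_apply, mul_sub, Finset.sum_sub_distrib]
  conv_rhs => rw [← mul_sub, ← Finset.sum_sub_distrib]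
  congr 1
  apply Finset.sum_congr rfl; intro m _
  rw [← Finset.sum_sub_distrib]
  apply Finset.sum_congr rfl; intro j _
  split <;> simp

lemma AopT_zero (s : ℝ) (μ : ℂ) : AopT d h N hN Δ A nn s μ 0 = 0 := by
  funext n i; simp [AopT]

lemma Aop_cont (μ : ℂ) (x : Fin N → Fin d → ℂ) :
    (∀ j, Continuous (A j)) → Continuous (fun s => Aop d h N hN Δ A nn s μ x) := by
  intro hA
  apply continuous_pi; intro n; apply continuous_pi; intro i
  simp only [Aop]
  apply Continuous.mul continuous_const
  apply continuous_finset_sum; intro j _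
  apply Continuous.mul continuous_const
  apply continuous_finset_sum; intro i' _
  apply Continuous.mul ?_ continuous_const
  exact Complex.continuous_ofReal.comp <|
    ((continuous_apply i').comp ((continuous_apply i).comp (hA j))).comp
      ((continuous_id.add continuous_const).mul continuous_const)

lemma AopT_cont (μ : ℂ) (x : Fin N → Fin d → ℂ) :
    (∀ j, Continuous (A j)) → Continuous (fun s => AopT d h N hN Δ A nn s μ x) := by
  intro hA
  apply continuous_pi; intro n; apply continuous_pi; intro i
  simp only [AopT]
  apply Continuous.mul continuous_const
  apply continuous_finset_sum; intro m _
  apply continuous_finset_sum; intro j _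
  split
  · apply Continuous.mul continuous_const
    apply continuous_finset_sum; intro i' _
    apply Continuous.mul ?_ continuous_const
    exact Complex.continuous_ofReal.comp <|
      ((continuous_apply i).comp ((continuous_apply i').comp (hA j))).comp
        ((continuous_id.add continuous_const).mul continuous_const)
  · exact continuous_const

lemma inner_sum_bound (C' X : ℝ) (hC' : 0 ≤ C') (hX : 0 ≤ X)
    (a : Fin d → ℝ) (ha : ∀ i', |a i'| ≤ C')
    (g : Fin d → ℂ) (hg : ∀ i', ‖g i'‖ ≤ X) :
    ‖∑ i' : Fin d, (a i' : ℂ) * g i'‖ ≤ (d : ℝ) * (C' * X) := by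
  calc ‖∑ i' : Fin d, (a i' : ℂ) * g i'‖ ≤ ∑ i' : Fin d, ‖(a i' : ℂ) * g i'‖ :=
        norm_sum_le _ _
    _ ≤ ∑ _i' : Fin d, C' * X := by
        apply Finset.sum_le_sum; intro i' _
        rw [norm_mul, Complex.norm_real, Real.norm_eq_abs]
        exact mul_le_mul (ha i') (hg i') (norm_nonneg _) hC'
    _ = (d : ℝ) * (C' * X) := by simp [Finset.sum_const, mul_comm]

lemma exists_bound (hA : ∀ j, Continuous (A j)) (μ ν : ℂ) :
    ∃ L : ℝ, 0 ≤ L ∧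
      (∀ s ∈ Icc (-2:ℝ) 3, ∀ x : Fin N → Fin d → ℂ,
        ‖Aop d h N hN Δ A nn s μ x‖ ≤ L * ‖x‖) ∧
      (∀ s ∈ Icc (-2:ℝ) 3, ∀ x : Fin N → Fin d → ℂ,
        ‖AopT d h N hN Δ A nn s ν x‖ ≤ L * ‖x‖) := by
  set ψ : ℝ → ℝ := fun s => ∑ j : Fin (h+1), ∑ n : Fin N, ∑ i : Fin d, ∑ i' : Fin d,
    |A j ((s + ((n:ℕ):ℝ)) * Δ) i i'| with hψ
  have hψc : ContinuousOn ψ (Icc (-2:ℝ) 3) := by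
    apply Continuous.continuousOn
    apply continuous_finset_sum; intro j _
    apply continuous_finset_sum; intro n _
    apply continuous_finset_sum; intro i _
    apply continuous_finset_sum; intro i' _
    exact (((continuous_apply i').comp ((continuous_apply i).comp (hA j))).comp
      ((continuous_id.add continuous_const).mul continuous_const)).abs
  obtain ⟨C, hC⟩ := (isCompact_Icc (a := (-2:ℝ)) (b := 3)).exists_bound_of_continuousOn hψc
  set C' : ℝ := max C 0 with hC'
  have hC'0 : 0 ≤ C' := le_max_right _ _
  have hentry : ∀ s ∈ Icc (-2:ℝ) 3, ∀ (j : Fin (h+1)) (n : Fin N) (i i' : Fin d),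
      |A j ((s + ((n:ℕ):ℝ)) * Δ) i i'| ≤ C' := by
    intro s hs j n i i'
    have h4 : |A j ((s + ((n:ℕ):ℝ)) * Δ) i i'|
        ≤ ∑ i' : Fin d, |A j ((s + ((n:ℕ):ℝ)) * Δ) i i'| :=
      Finset.single_le_sum (f := fun (i' : Fin d) => |A j ((s + ((n:ℕ):ℝ)) * Δ) i i'|)
        (fun _ _ => abs_nonneg _) (Finset.mem_univ i')
    have h3 : (∑ i' : Fin d, |A j ((s + ((n:ℕ):ℝ)) * Δ) i i'|)
        ≤ ∑ i : Fin d, ∑ i' : Fin d, |A j ((s + ((n:ℕ):ℝ)) * Δ) i i'| :=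
      Finset.single_le_sum (f := fun (i : Fin d) => ∑ i' : Fin d, |A j ((s + ((n:ℕ):ℝ)) * Δ) i i'|)
        (fun _ _ => by positivity) (Finset.mem_univ i)
    have h2 : (∑ i : Fin d, ∑ i' : Fin d, |A j ((s + ((n:ℕ):ℝ)) * Δ) i i'|)
        ≤ ∑ n : Fin N, ∑ i : Fin d, ∑ i' : Fin d, |A j ((s + ((n:ℕ):ℝ)) * Δ) i i'| :=
      Finset.single_le_sum
        (f := fun (n : Fin N) => ∑ i : Fin d, ∑ i' : Fin d, |A j ((s + ((n:ℕ):ℝ)) * Δ) i i'|)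
        (fun _ _ => by positivity) (Finset.mem_univ n)
    have h1 : (∑ n : Fin N, ∑ i : Fin d, ∑ i' : Fin d, |A j ((s + ((n:ℕ):ℝ)) * Δ) i i'|)
        ≤ ψ s :=
      Finset.single_le_sum
        (f := fun (j : Fin (h+1)) => ∑ n : Fin N, ∑ i : Fin d, ∑ i' : Fin d,
          |A j ((s + ((n:ℕ):ℝ)) * Δ) i i'|)
        (fun _ _ => by positivity) (Finset.mem_univ j)
    have h0 : ψ s ≤ C' := le_trans (le_trans (le_abs_self _) (hC s hs)) (le_max_left _ _)
    linarith
  set Mμ : ℝ := (∑ n : Fin N, ∑ j : Fin (h+1), ‖μ ^ aExp N (((n:ℕ):ℤ) + 1 - (nn j : ℤ))‖)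
    + (∑ n : Fin N, ∑ j : Fin (h+1), ‖ν ^ aExp N (((n:ℕ):ℤ) + 1 - (nn j : ℤ))‖) with hMμ
  have hMμ0 : 0 ≤ Mμ := by positivity
  refine ⟨|Δ| * Mμ * ((d:ℝ) * C'), by positivity, ?_, ?_⟩
  · intro s hs x
    have hxn : 0 ≤ ‖x‖ := norm_nonneg x
    rw [pi_norm_le_iff_of_nonneg (by positivity)]
    intro n
    rw [pi_norm_le_iff_of_nonneg (by positivity)]
    intro i
    show ‖(Δ:ℂ) * _‖ ≤ _
    rw [norm_mul, Complex.norm_real, Real.norm_eq_abs]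
    have key : ‖∑ j : Fin (h+1), μ ^ aExp N (((n:ℕ):ℤ) + 1 - (nn j : ℤ)) *
        ∑ i' : Fin d, ((A j ((s + ((n:ℕ):ℝ)) * Δ)) i i' : ℂ) *
          x (bIdx N hN (((n:ℕ):ℤ) + 1 - (nn j : ℤ))) i'‖ ≤ Mμ * ((d:ℝ) * (C' * ‖x‖)) := by
      calc _ ≤ ∑ j : Fin (h+1), ‖μ ^ aExp N (((n:ℕ):ℤ) + 1 - (nn j : ℤ)) *
            ∑ i' : Fin d, ((A j ((s + ((n:ℕ):ℝ)) * Δ)) i i' : ℂ) *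
              x (bIdx N hN (((n:ℕ):ℤ) + 1 - (nn j : ℤ))) i'‖ := norm_sum_le _ _
        _ ≤ ∑ j : Fin (h+1), ‖μ ^ aExp N (((n:ℕ):ℤ) + 1 - (nn j : ℤ))‖ *
              ((d:ℝ) * (C' * ‖x‖)) := by
            apply Finset.sum_le_sum; intro j _
            rw [norm_mul]
            apply mul_le_mul_of_nonneg_left ?_ (norm_nonneg _)
            apply inner_sum_bound C' ‖x‖ hC'0 hxn _ (hentry s hs j n i) _
              (fun i' => (norm_le_pi_norm _ i').trans (norm_le_pi_norm x _))
        _ = (∑ j : Fin (h+1), ‖μ ^ aExp N (((n:ℕ):ℤ) + 1 - (nn j : ℤ))‖) *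
              ((d:ℝ) * (C' * ‖x‖)) := by rw [Finset.sum_mul]
        _ ≤ Mμ * ((d:ℝ) * (C' * ‖x‖)) := by
            apply mul_le_mul_of_nonneg_right ?_ (by positivity)
            rw [hMμ]
            have : (∑ j : Fin (h+1), ‖μ ^ aExp N (((n:ℕ):ℤ) + 1 - (nn j : ℤ))‖)
                ≤ ∑ n : Fin N, ∑ j : Fin (h+1), ‖μ ^ aExp N (((n:ℕ):ℤ) + 1 - (nn j : ℤ))‖ := by
              apply Finset.single_le_sum
                (f := fun (m : Fin N) => ∑ j : Fin (h+1),
                  ‖μ ^ aExp N (((m:ℕ):ℤ) + 1 - (nn j : ℤ))‖)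
                (fun _ _ => by positivity) (Finset.mem_univ n)
            have h2 : (0:ℝ) ≤ ∑ n : Fin N, ∑ j : Fin (h+1),
                ‖ν ^ aExp N (((n:ℕ):ℤ) + 1 - (nn j : ℤ))‖ := by positivity
            linarith
    calc |Δ| * ‖_‖ ≤ |Δ| * (Mμ * ((d:ℝ) * (C' * ‖x‖))) :=
          mul_le_mul_of_nonneg_left key (abs_nonneg Δ)
      _ = |Δ| * Mμ * ((d:ℝ) * C') * ‖x‖ := by ring
  · intro s hs x
    have hxn : 0 ≤ ‖x‖ := norm_nonneg x
    rw [pi_norm_le_iff_of_nonneg (by positivity)]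
    intro n
    rw [pi_norm_le_iff_of_nonneg (by positivity)]
    intro i
    show ‖(Δ:ℂ) * _‖ ≤ _
    rw [norm_mul, Complex.norm_real, Real.norm_eq_abs]
    have key : ‖∑ m : Fin N, ∑ j : Fin (h+1),
        (if n = bIdx N hN (((m:ℕ):ℤ) + 1 - (nn j : ℤ)) then
          ν ^ aExp N (((m:ℕ):ℤ) + 1 - (nn j : ℤ)) *
            ∑ i' : Fin d, ((A j ((s + ((m:ℕ):ℝ)) * Δ)) i' i : ℂ) * x m i'
        else 0)‖ ≤ Mμ * ((d:ℝ) * (C' * ‖x‖)) := by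
      calc _ ≤ ∑ m : Fin N, ‖∑ j : Fin (h+1),
            (if n = bIdx N hN (((m:ℕ):ℤ) + 1 - (nn j : ℤ)) then
              ν ^ aExp N (((m:ℕ):ℤ) + 1 - (nn j : ℤ)) *
                ∑ i' : Fin d, ((A j ((s + ((m:ℕ):ℝ)) * Δ)) i' i : ℂ) * x m i'
            else 0)‖ := norm_sum_le _ _
        _ ≤ ∑ m : Fin N, ∑ j : Fin (h+1), ‖ν ^ aExp N (((m:ℕ):ℤ) + 1 - (nn j : ℤ))‖ *
              ((d:ℝ) * (C' * ‖x‖)) := by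
            apply Finset.sum_le_sum; intro m _
            calc _ ≤ ∑ j : Fin (h+1), ‖(if n = bIdx N hN (((m:ℕ):ℤ) + 1 - (nn j : ℤ)) then
                  ν ^ aExp N (((m:ℕ):ℤ) + 1 - (nn j : ℤ)) *
                    ∑ i' : Fin d, ((A j ((s + ((m:ℕ):ℝ)) * Δ)) i' i : ℂ) * x m i'
                else 0)‖ := norm_sum_le _ _
              _ ≤ _ := by
                apply Finset.sum_le_sum; intro j _
                split
                · rw [norm_mul]
                  apply mul_le_mul_of_nonneg_left ?_ (norm_nonneg _)
                  apply inner_sum_bound C' ‖x‖ hC'0 hxn _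
                    (fun i' => hentry s hs j m i' i) _
                    (fun i' => (norm_le_pi_norm _ i').trans (norm_le_pi_norm x _))
                · simp; positivity
        _ = (∑ m : Fin N, ∑ j : Fin (h+1), ‖ν ^ aExp N (((m:ℕ):ℤ) + 1 - (nn j : ℤ))‖) *
              ((d:ℝ) * (C' * ‖x‖)) := by rw [Finset.sum_mul]; simp [Finset.sum_mul]
        _ ≤ Mμ * ((d:ℝ) * (C' * ‖x‖)) := by
            apply mul_le_mul_of_nonneg_right ?_ (by positivity)
            rw [hMμ]
            have h2 : (0:ℝ) ≤ ∑ n : Fin N, ∑ j : Fin (h+1),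
                ‖μ ^ aExp N (((n:ℕ):ℤ) + 1 - (nn j : ℤ))‖ := by positivity
            linarith
    calc |Δ| * ‖_‖ ≤ |Δ| * (Mμ * ((d:ℝ) * (C' * ‖x‖))) :=
          mul_le_mul_of_nonneg_left key (abs_nonneg Δ)
      _ = |Δ| * Mμ * ((d:ℝ) * C') * ‖x‖ := by ring
lemma pairing_identity (s : ℝ) (μ : ℂ) (p q : Fin N → Fin d → ℂ) :
    ∑ n : Fin N, ∑ i : Fin d,
        (starRingEnd ℂ) (AopT d h N hN Δ A nn s ((starRingEnd ℂ) μ) p n i) * q n i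
      = ∑ n : Fin N, ∑ i : Fin d,
        (starRingEnd ℂ) (p n i) * Aop d h N hN Δ A nn s μ q n i := by
  have hconj : ∀ k : ℤ, (starRingEnd ℂ) ((starRingEnd ℂ) μ ^ k) = μ ^ k := fun k => by
    rw [map_zpow₀, Complex.conj_conj]
  simp only [AopT, Aop, map_mul, map_sum, apply_ite (starRingEnd ℂ), map_zero,
    Complex.conj_ofReal, hconj]
  simp only [Finset.mul_sum, Finset.sum_mul, mul_ite, ite_mul, mul_zero, zero_mul]
  conv_lhs => enter [2, y]; rw [Finset.sum_comm]
  conv_lhs => enter [2, y, 2, m]; rw [Finset.sum_comm]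
  rw [Finset.sum_comm]
  conv_lhs => enter [2, m]; rw [Finset.sum_comm]
  conv_lhs => enter [2, m, 2, j]; rw [Finset.sum_comm]
  simp only [Finset.sum_ite_eq' Finset.univ, Finset.mem_univ, if_true]
  conv_lhs => enter [2, m, 2, j]; rw [Finset.sum_comm]
  conv_lhs => enter [2, m]; rw [Finset.sum_comm]
  refine Finset.sum_congr rfl fun m _ => Finset.sum_congr rfl fun i' _ =>
    Finset.sum_congr rfl fun j _ => Finset.sum_congr rfl fun i _ => ?_
  ring

lemma B_identity (μ : ℂ) (u v : Fin N → Fin d → ℂ) :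
    ∑ n : Fin N, ∑ i : Fin d, (starRingEnd ℂ) (u n i) * Bop d N hN μ v n i
      = ∑ n : Fin N, ∑ i : Fin d,
          (starRingEnd ℂ) (BopT d N hN ((starRingEnd ℂ) μ) u n i) * v n i := by
  set σ : Fin N → Fin N := fun n => ⟨((n:ℕ)+1) % N, Nat.mod_lt _ hN⟩ with hσ
  have hval : ∀ n : Fin N, ((n:ℕ)+1) % N = if (n:ℕ)+1 < N then (n:ℕ)+1 else 0 := by
    intro n
    split
    · exact Nat.mod_eq_of_lt (by assumption)
    · have h1 : (n:ℕ)+1 = N := by have := n.isLt; omega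
      simp [h1]
  have hinj : Function.Injective σ := by
    intro a b hab
    have ha := hval a; have hb := hval b
    have h2 : ((a:ℕ)+1) % N = ((b:ℕ)+1) % N := congrArg Fin.val hab
    rw [ha, hb] at h2
    have ha' := a.isLt; have hb' := b.isLt
    apply Fin.ext
    split at h2 <;> split at h2 <;> omega
  have hbij : Function.Bijective σ := Finite.injective_iff_bijective.mp hinj
  refine Finset.sum_bijective σ hbij (fun n => by simp) fun n _ => ?_
  refine Finset.sum_congr rfl fun i _ => ?_
  by_cases hn : (n:ℕ)+1 < N
  · have hσn : σ n = ⟨(n:ℕ)+1, hn⟩ := Fin.ext (by simp [hσ, hval n, hn])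
    have hpos : 0 < ((σ n : Fin N):ℕ) := by rw [hσn]; simp
    rw [Bop, BopT, dif_pos hn, dif_pos hpos]
    have harg : (⟨((σ n : Fin N):ℕ) - 1, by have := (σ n).isLt; omega⟩ : Fin N) = n := by
      apply Fin.ext
      show ((σ n : Fin N):ℕ) - 1 = (n:ℕ)
      have : ((σ n : Fin N):ℕ) = (n:ℕ)+1 := congrArg Fin.val hσn
      omega
    rw [harg, hσn]
  · have hσn : σ n = ⟨0, hN⟩ := Fin.ext (by simp [hσ, hval n, hn])
    have hnot : ¬ 0 < ((σ n : Fin N):ℕ) := by rw [hσn]; simp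
    rw [Bop, BopT, dif_neg hn, dif_neg hnot]
    have harg : (⟨N - 1, by omega⟩ : Fin N) = n := by
      apply Fin.ext; simp; have := n.isLt; omega
    rw [harg, hσn, map_mul, Complex.conj_conj]
    ring

lemma pairing_const (μ : ℂ) (p q : ℝ → Fin N → Fin d → ℂ)
    (hp : ∀ s ∈ Icc (0:ℝ) 1, HasDerivAt p
      (fun n i => -(AopT d h N hN Δ A nn s ((starRingEnd ℂ) μ) (p s) n i)) s)
    (hq : ∀ s ∈ Icc (0:ℝ) 1, HasDerivAt q (Aop d h N hN Δ A nn s μ (q s)) s) :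
    (∑ n : Fin N, ∑ i : Fin d, (starRingEnd ℂ) (p 1 n i) * q 1 n i)
      = ∑ n : Fin N, ∑ i : Fin d, (starRingEnd ℂ) (p 0 n i) * q 0 n i := by
  set φ : ℝ → ℂ := fun s => ∑ n : Fin N, ∑ i : Fin d,
    (starRingEnd ℂ) (p s n i) * q s n i with hφ
  have key : ∀ s ∈ Icc (0:ℝ) 1, HasDerivAt φ
      (∑ n : Fin N, ∑ i : Fin d,
        ((starRingEnd ℂ) (-(AopT d h N hN Δ A nn s ((starRingEnd ℂ) μ) (p s) n i)) * q s n i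
          + (starRingEnd ℂ) (p s n i) * Aop d h N hN Δ A nn s μ (q s) n i)) s := by
    intro s hs
    apply HasDerivAt.fun_sum; intro n _
    apply HasDerivAt.fun_sum; intro i _
    have hpni : HasDerivAt (fun t => p t n i)
        (-(AopT d h N hN Δ A nn s ((starRingEnd ℂ) μ) (p s) n i)) s :=
      (hasDerivAt_pi.mp ((hasDerivAt_pi.mp (hp s hs)) n)) i
    have hqni : HasDerivAt (fun t => q t n i) (Aop d h N hN Δ A nn s μ (q s) n i) s :=
      (hasDerivAt_pi.mp ((hasDerivAt_pi.mp (hq s hs)) n)) i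
    have hconjd : HasDerivAt (fun t => (starRingEnd ℂ) (p t n i))
        ((starRingEnd ℂ) (-(AopT d h N hN Δ A nn s ((starRingEnd ℂ) μ) (p s) n i))) s := by
      simpa only [starRingEnd_apply] using hpni.star
    exact hconjd.mul hqni
  have hzero : ∀ s ∈ Icc (0:ℝ) 1, HasDerivAt φ 0 s := by
    intro s hs
    have hD := key s hs
    have heq : (∑ n : Fin N, ∑ i : Fin d,
        ((starRingEnd ℂ) (-(AopT d h N hN Δ A nn s ((starRingEnd ℂ) μ) (p s) n i)) * q s n i
          + (starRingEnd ℂ) (p s n i) * Aop d h N hN Δ A nn s μ (q s) n i)) = 0 := by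
      have hpair := pairing_identity hN Δ A nn s μ (p s) (q s)
      simp only [map_neg, neg_mul, Finset.sum_add_distrib, Finset.sum_neg_distrib]
      rw [hpair]
      ring
    rwa [heq] at hD
  have hc : ContinuousOn φ (Icc (0:ℝ) 1) :=
    fun s hs => ((hzero s hs).continuousAt).continuousWithinAt
  have := constant_of_has_deriv_right_zero hc
    (fun s hs => (hzero s (Ico_subset_Icc_self hs)).hasDerivWithinAt)
  exact this 1 ⟨zero_le_one, le_rfl⟩

lemma single_collapse (m : Fin N) (i : Fin d) (x : Fin N → Fin d → ℂ) :
    (∑ n : Fin N, ∑ i' : Fin d, (starRingEnd ℂ) (x n i') *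
        (if n = m then (if i' = i then (1:ℂ) else 0) else 0))
      = (starRingEnd ℂ) (x m i) := by
  simp [mul_ite, mul_one, mul_zero, Finset.sum_ite_eq']
/-- **Theorem 4.1.** For `μ ≠ 0` and `u ≠ 0`: `u` is a left eigenvector of the
characteristic matrix at `μ` (i.e. `u* N(μ)v = 0` for every `v`, with `N(μ)v = q(1) - B(μ)v`
computed from any solution of `q' = A(s,μ)q`, `q(0) = v`) if and only if `u` is a right
eigenvector of the transposed problem at `conj μ` (i.e. there is `p` with
`p' = -A(s, conj μ)ᵀ p` on `[0,1]`, `p(1) = u` and `p(0) = B(conj μ)ᵀ u`). -/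
theorem left_eigenvector_characterization
    (d h N : ℕ) (hd : 0 < d) (hN : 0 < N) (Δ : ℝ) (hΔ : 0 < Δ)
    (A : Fin (h+1) → ℝ → Matrix (Fin d) (Fin d) ℝ)
    (hA : ∀ j, Continuous (A j))
    (hper : ∀ j t, A j (t + (N : ℝ) * Δ) = A j t)
    (nn : Fin (h+1) → ℕ) (hn0 : nn 0 = 0)
    (hmono : ∀ i j : Fin (h+1), 1 ≤ (i : ℕ) → i < j → nn i < nn j)
    (μ : ℂ) (hμ : μ ≠ 0)
    (u : Fin N → Fin d → ℂ) (hu : u ≠ 0) :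
    (∀ v : Fin N → Fin d → ℂ, ∀ q : ℝ → Fin N → Fin d → ℂ, q 0 = v →
      (∀ s ∈ Set.Icc (0:ℝ) 1, HasDerivAt q (Aop d h N hN Δ A nn s μ (q s)) s) →
      (∑ n : Fin N, ∑ i : Fin d,
        (starRingEnd ℂ) (u n i) * (q 1 n i - Bop d N hN μ v n i)) = 0) ↔
    (∃ p : ℝ → Fin N → Fin d → ℂ,
      (∀ s ∈ Set.Icc (0:ℝ) 1,
        HasDerivAt p (fun n i => -(AopT d h N hN Δ A nn s (starRingEnd ℂ μ) (p s) n i)) s) ∧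
      p 1 = u ∧ p 0 = BopT d N hN (starRingEnd ℂ μ) u) := by
  
  -- abbreviations
  obtain ⟨L, hL0, hbA, hbT⟩ := exists_bound hN Δ A nn hA μ ((starRingEnd ℂ) μ)
  have hvp_eq : ∀ (s : ℝ) (x : Fin N → Fin d → ℂ),
      (fun n i => -(AopT d h N hN Δ A nn s ((starRingEnd ℂ) μ) x n i))
        = -(AopT d h N hN Δ A nn s ((starRingEnd ℂ) μ) x) := fun s x => rfl
  have hlipq : ∀ s ∈ Set.Icc (-2:ℝ) 3,
      LipschitzWith (Real.toNNReal L) (fun x => Aop d h N hN Δ A nn s μ x) := by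
    intro s hs
    refine LipschitzWith.of_dist_le_mul fun x y => ?_
    rw [dist_eq_norm, dist_eq_norm]
    rw [show Aop d h N hN Δ A nn s μ x - Aop d h N hN Δ A nn s μ y
        = Aop d h N hN Δ A nn s μ (x - y) from (Aop_sub hN Δ A nn s μ x y).symm]
    rw [Real.coe_toNNReal L hL0]
    exact hbA s hs (x - y)
  have hlipp : ∀ s ∈ Set.Icc (-2:ℝ) 3,
      LipschitzWith (Real.toNNReal L)
        (fun x => (fun n i => -(AopT d h N hN Δ A nn s ((starRingEnd ℂ) μ) x n i))) := by
    intro s hs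
    refine LipschitzWith.of_dist_le_mul fun x y => ?_
    rw [dist_eq_norm, dist_eq_norm, hvp_eq, hvp_eq]
    rw [show -(AopT d h N hN Δ A nn s ((starRingEnd ℂ) μ) x)
          - -(AopT d h N hN Δ A nn s ((starRingEnd ℂ) μ) y)
        = -(AopT d h N hN Δ A nn s ((starRingEnd ℂ) μ) (x - y)) by
      rw [AopT_sub hN Δ A nn]; abel]
    rw [norm_neg, Real.coe_toNNReal L hL0]
    exact hbT s hs (x - y)
  have solq : ∀ v : Fin N → Fin d → ℂ, ∃ qf : ℝ → Fin N → Fin d → ℂ, qf 0 = v ∧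
      ∀ t ∈ Set.Icc (0:ℝ) 1, HasDerivAt qf (Aop d h N hN Δ A nn t μ (qf t)) t := by
    intro v
    exact exists_sol_Icc01 (fun s x => Aop d h N hN Δ A nn s μ x) L hL0 0
      ⟨le_rfl, zero_le_one⟩ hlipq (fun s => Aop_zero hN Δ A nn s μ)
      (fun x => (Aop_cont hN Δ A nn μ x hA).continuousOn) v
  have solp : ∃ pf : ℝ → Fin N → Fin d → ℂ, pf 1 = u ∧
      ∀ t ∈ Set.Icc (0:ℝ) 1, HasDerivAt pf
        (fun n i => -(AopT d h N hN Δ A nn t ((starRingEnd ℂ) μ) (pf t) n i)) t := by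
    exact exists_sol_Icc01
      (fun s x => (fun n i => -(AopT d h N hN Δ A nn s ((starRingEnd ℂ) μ) x n i))) L hL0 1
      ⟨zero_le_one, le_rfl⟩ hlipp
      (fun s => by
        show (fun n i => -(AopT d h N hN Δ A nn s ((starRingEnd ℂ) μ)
          (0 : Fin N → Fin d → ℂ) n i)) = 0
        rw [hvp_eq, AopT_zero hN Δ A nn]; simp)
      (fun x => by
        have := (AopT_cont hN Δ A nn ((starRingEnd ℂ) μ) x hA).neg
        exact this.continuousOn) u
  constructor
  · -- (i) → (ii)
    intro H
    obtain ⟨pf, hpf1, hpfd⟩ := solp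
    refine ⟨pf, hpfd, hpf1, ?_⟩
    funext m i
    obtain ⟨qf, hq0, hqd⟩ := solq
      (fun n' i' => if n' = m then (if i' = i then (1:ℂ) else 0) else 0)
    have hH := H _ qf hq0 hqd
    have hconst := pairing_const hN Δ A nn μ pf qf hpfd hqd
    rw [hpf1, hq0] at hconst
    -- hH : sum conj u (qf 1 - Bop v) = 0
    have hH' : (∑ n : Fin N, ∑ i' : Fin d, (starRingEnd ℂ) (u n i') * qf 1 n i')
        = ∑ n : Fin N, ∑ i' : Fin d, (starRingEnd ℂ) (u n i') *
            Bop d N hN μ (fun n' i' => if n' = m then (if i' = i then (1:ℂ) else 0) else 0) n i' := by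
      have := hH
      simp only [mul_sub, Finset.sum_sub_distrib] at this
      exact sub_eq_zero.mp this
    have hsingle1 := single_collapse m i (pf 0)
    have hsingle2 := single_collapse m i (BopT d N hN ((starRingEnd ℂ) μ) u)
    have hB := B_identity hN μ u
      (fun n' i' => if n' = m then (if i' = i then (1:ℂ) else 0) else 0)
    apply (starRingEnd ℂ).injective
    calc (starRingEnd ℂ) (pf 0 m i)
        = ∑ n : Fin N, ∑ i' : Fin d, (starRingEnd ℂ) (pf 0 n i') *
            (if n = m then (if i' = i then (1:ℂ) else 0) else 0) := hsingle1.symm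
      _ = ∑ n : Fin N, ∑ i' : Fin d, (starRingEnd ℂ) (u n i') * qf 1 n i' := hconst.symm
      _ = ∑ n : Fin N, ∑ i' : Fin d, (starRingEnd ℂ) (u n i') *
            Bop d N hN μ (fun n' i' => if n' = m then (if i' = i then (1:ℂ) else 0) else 0) n i' := hH'
      _ = ∑ n : Fin N, ∑ i' : Fin d,
            (starRingEnd ℂ) (BopT d N hN ((starRingEnd ℂ) μ) u n i') *
            (if n = m then (if i' = i then (1:ℂ) else 0) else 0) := hB
      _ = (starRingEnd ℂ) (BopT d N hN ((starRingEnd ℂ) μ) u m i) := hsingle2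
  · -- (ii) → (i)
    rintro ⟨pf, hpfd, hpf1, hpf0⟩ v q hq0 hqd
    have hconst := pairing_const hN Δ A nn μ pf q hpfd hqd
    rw [hpf1, hq0, hpf0] at hconst
    have hB := B_identity hN μ u v
    simp only [mul_sub, Finset.sum_sub_distrib]
    rw [hconst, ← hB]
    ring
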